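/- Let G = (V ∪ {r}, E) with nonnegative weights w, f ∈ E, δ > 0, w' = w + δ·1_f. For a uniformly random permutation σ of V, let x_{σ,k} = OPT({r,σ(1),…,σ(k)}, w) - OPT({r,σ(1),…,σ(k-1)}, w) and x'_{σ,k} defined analogously with w'. Then for every fixed σ, Σ_{k=1}^{|V|} |x'_{σ,k} - x_{σ,k}| ≤ 2δ. -/

import Mathlib

/-- `a` and `b` are connected using the (oriented representatives of) edges in `F`. -/
def EdgeConn {U : Type*} (F : Finset (U × U)) (a b : U) : Prop :=
  Relation.ReflTransGen (fun x y => (x, y) ∈ F ∨ (y, x) ∈ F) a b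

/-- `F` is the edge set of a spanning tree of the subgraph of `(U, Es)` induced
by the vertex set `X`. -/
def IsSpanningTree {U : Type*} (Es : Finset (U × U)) (X : Finset U)
    (F : Finset (U × U)) : Prop :=
  F ⊆ Es ∧ (∀ e ∈ F, e.1 ∈ X ∧ e.2 ∈ X) ∧
    (∀ a ∈ X, ∀ b ∈ X, EdgeConn F a b) ∧ F.card + 1 = X.card

/-- Minimum weight of a spanning tree of the induced subgraph on `X`. -/
noncomputable def OPT {U : Type*} (Es : Finset (U × U)) (X : Finset U)
    (w : U × U → ℝ) : ℝ :=
  sInf {t | ∃ F, IsSpanningTree Es X F ∧ t = ∑ e ∈ F, w e}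
/-- The characteristic function of the minimum spanning tree game:
`ν(S) = OPT(S ∪ {r})`. -/
noncomputable def mstNu {U : Type*} [DecidableEq U] (Es : Finset (U × U)) (r : U)
    (w : U × U → ℝ) (S : Finset U) : ℝ :=
  OPT Es (insert r S) w

/-- The set of agents occupying the first `k` positions of the ordering `σ`. -/
def prefixSet {U : Type*} [Fintype U] [DecidableEq U] (r : U)
    (σ : Fin (Fintype.card {u : U // u ≠ r}) ≃ {u : U // u ≠ r}) (k : ℕ) :
    Finset U :=
  (Finset.univ.filter (fun j : Fin (Fintype.card {u : U // u ≠ r}) => (j : ℕ) < k)).image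
    (fun j => (σ j : U))

/-- The Shapley value of the minimum spanning tree game. -/
noncomputable def mstShapley {U : Type*} [Fintype U] [DecidableEq U]
    (Es : Finset (U × U)) (r : U) (w : U × U → ℝ) (v : {u : U // u ≠ r}) : ℝ :=
  ((Fintype.card {u : U // u ≠ r}).factorial : ℝ)⁻¹ *
    ∑ σ : Fin (Fintype.card {u : U // u ≠ r}) ≃ {u : U // u ≠ r},
      (mstNu Es r w (insert (v : U) (prefixSet r σ (σ.symm v))) -
        mstNu Es r w (prefixSet r σ (σ.symm v)))

/- ===== auxiliary development ===== -/

set_option linter.unusedSectionVars false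
section A
open Finset
variable {U : Type*} [DecidableEq U]

lemma ec_refl (F : Finset (U × U)) (a : U) : EdgeConn F a a := Relation.ReflTransGen.refl

lemma ec_trans {F : Finset (U × U)} {a b c : U} (h1 : EdgeConn F a b)
    (h2 : EdgeConn F b c) : EdgeConn F a c := Relation.ReflTransGen.trans h1 h2

lemma ec_symm {F : Finset (U × U)} {a b : U} (h : EdgeConn F a b) : EdgeConn F b a :=
  (@Relation.ReflTransGen.symmetric _ (fun x y => (x, y) ∈ F ∨ (y, x) ∈ F)
    ⟨fun _ _ hxy => hxy.symm⟩).symm _ _ h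

lemma ec_mono {F G : Finset (U × U)} (hFG : F ⊆ G) {a b : U} (h : EdgeConn F a b) :
    EdgeConn G a b :=
  Relation.ReflTransGen.mono (r := fun x y => (x, y) ∈ F ∨ (y, x) ∈ F)
    (p := fun x y => (x, y) ∈ G ∨ (y, x) ∈ G)
    (fun _ _ hxy => hxy.imp (fun hh => hFG hh) (fun hh => hFG hh)) _ _ h

lemma ec_single {F : Finset (U × U)} {e : U × U} (he : e ∈ F) : EdgeConn F e.1 e.2 :=
  Relation.ReflTransGen.single (Or.inl he)

lemma ec_insert {F : Finset (U × U)} {e : U × U} {a b : U}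
    (h : EdgeConn (insert e F) a b) :
    EdgeConn F a b ∨ (EdgeConn F a e.1 ∧ EdgeConn F e.2 b) ∨
      (EdgeConn F a e.2 ∧ EdgeConn F e.1 b) := by
  induction h with
  | refl => exact Or.inl (ec_refl F a)
  | @tail b c hab hbc ih =>
    have hbc' : (b, c) ∈ insert e F ∨ (c, b) ∈ insert e F := hbc
    rcases hbc' with hs | hs
    · rcases Finset.mem_insert.mp hs with rfl | hsF
      · rcases ih with h' | ⟨h1, h2⟩ | ⟨h1, h2⟩
        · exact Or.inr (Or.inl ⟨h', ec_refl F c⟩)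
        · exact Or.inr (Or.inl ⟨h1, ec_refl F c⟩)
        · exact Or.inl h1
      · have hstep : EdgeConn F b c := Relation.ReflTransGen.single (Or.inl hsF)
        rcases ih with h' | ⟨h1, h2⟩ | ⟨h1, h2⟩
        · exact Or.inl (ec_trans h' hstep)
        · exact Or.inr (Or.inl ⟨h1, ec_trans h2 hstep⟩)
        · exact Or.inr (Or.inr ⟨h1, ec_trans h2 hstep⟩)
    · rcases Finset.mem_insert.mp hs with rfl | hsF
      · rcases ih with h' | ⟨h1, h2⟩ | ⟨h1, h2⟩
        · exact Or.inr (Or.inr ⟨h', ec_refl F c⟩)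
        · exact Or.inl h1
        · exact Or.inr (Or.inr ⟨h1, ec_refl F c⟩)
      · have hstep : EdgeConn F b c := Relation.ReflTransGen.single (Or.inr hsF)
        rcases ih with h' | ⟨h1, h2⟩ | ⟨h1, h2⟩
        · exact Or.inl (ec_trans h' hstep)
        · exact Or.inr (Or.inl ⟨h1, ec_trans h2 hstep⟩)
        · exact Or.inr (Or.inr ⟨h1, ec_trans h2 hstep⟩)

lemma ec_cross {F : Finset (U × U)} {P : U → Prop} {a b : U}
    (h : EdgeConn F a b) (ha : P a) : ¬ P b →
    ∃ e ∈ F, (P e.1 ∧ ¬ P e.2) ∨ (P e.2 ∧ ¬ P e.1) := by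
  induction h with
  | refl => exact fun hb => absurd ha hb
  | @tail b c hab hbc ih =>
    intro hc
    by_cases hb : P b
    · have hbc' : (b, c) ∈ F ∨ (c, b) ∈ F := hbc
      rcases hbc' with hs | hs
      · exact ⟨(b, c), hs, Or.inl ⟨hb, hc⟩⟩
      · exact ⟨(c, b), hs, Or.inr ⟨hb, hc⟩⟩
    · exact ih hb

lemma ec_filter {F : Finset (U × U)} {P : U → Prop}
    [DecidablePred (fun g : U × U => P g.1)]
    (hsplit : ∀ g ∈ F, (P g.1 ↔ P g.2)) {a b : U}
    (h : EdgeConn F a b) :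
    P a → EdgeConn (F.filter (fun g => P g.1)) a b := by
  induction h using Relation.ReflTransGen.head_induction_on with
  | refl => exact fun _ => ec_refl _ _
  | @head a c hac hcb ih =>
    intro ha
    have hac' : (a, c) ∈ F ∨ (c, a) ∈ F := hac
    rcases hac' with hs | hs
    · have hPc : P c := (hsplit _ hs).mp ha
      have hm : (a, c) ∈ F.filter (fun g => P g.1) := Finset.mem_filter.mpr ⟨hs, ha⟩
      exact Relation.ReflTransGen.head (Or.inl hm) (ih hPc)
    · have hPc : P c := (hsplit _ hs).mpr ha
      have hm : (c, a) ∈ F.filter (fun g => P g.1) := Finset.mem_filter.mpr ⟨hs, hPc⟩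
      exact Relation.ReflTransGen.head (Or.inr hm) (ih hPc)

end A

set_option linter.unusedSectionVars false
section B
open Finset
variable {U : Type*} [DecidableEq U]

open scoped Classical in
lemma conn_card_lb : ∀ (F : Finset (U × U)) (X : Finset U),
    (∀ g ∈ F, g.1 ∈ X ∧ g.2 ∈ X) → (∀ a ∈ X, ∀ b ∈ X, EdgeConn F a b) →
    X.card ≤ F.card + 1 := by
  intro F
  induction F using Finset.strongInduction with
  | _ F IH =>
    intro X hend hconn
    by_cases hX : X.card ≤ 1
    · omega
    · have hX2 : 1 < X.card := by omega
      obtain ⟨a, ha, b, hb, hab⟩ := Finset.one_lt_card.mp hX2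
      have hpath := hconn a ha b hb
      have hFne : ∃ e, e ∈ F := by
        rcases Relation.ReflTransGen.cases_head hpath with rfl | ⟨c, hs, _⟩
        · exact absurd rfl hab
        · rcases (hs : (a, c) ∈ F ∨ (c, a) ∈ F) with h | h
          exacts [⟨_, h⟩, ⟨_, h⟩]
      obtain ⟨e0, he0⟩ := hFne
      set F' := F.erase e0 with hF'
      set P : U → Prop := fun v => EdgeConn F' e0.1 v with hPdef
      have hsplit : ∀ g ∈ F', (P g.1 ↔ P g.2) := by
        intro g hg
        constructor
        · exact fun h => ec_trans h (ec_single hg)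
        · exact fun h => ec_trans h (ec_symm (ec_single hg))
      have hsplit2 : ∀ g ∈ F', ((¬ P g.1) ↔ (¬ P g.2)) := fun g hg => not_congr (hsplit g hg)
      set X1 := X.filter P with hX1
      set X2 := X.filter (fun v => ¬ P v) with hX2
      set F1 := F'.filter (fun g => P g.1) with hF1
      set F2 := F'.filter (fun g => ¬ P g.1) with hF2
      have hF'sub : F' ⊂ F := Finset.erase_ssubset he0
      have hend' : ∀ g ∈ F', g.1 ∈ X ∧ g.2 ∈ X := fun g hg => hend g (Finset.mem_of_mem_erase hg)
      have hend1 : ∀ g ∈ F1, g.1 ∈ X1 ∧ g.2 ∈ X1 := by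
        intro g hg
        obtain ⟨hg', hP1⟩ := Finset.mem_filter.mp hg
        exact ⟨Finset.mem_filter.mpr ⟨(hend' g hg').1, hP1⟩,
          Finset.mem_filter.mpr ⟨(hend' g hg').2, (hsplit g hg').mp hP1⟩⟩
      have hend2 : ∀ g ∈ F2, g.1 ∈ X2 ∧ g.2 ∈ X2 := by
        intro g hg
        obtain ⟨hg', hP1⟩ := Finset.mem_filter.mp hg
        exact ⟨Finset.mem_filter.mpr ⟨(hend' g hg').1, hP1⟩,
          Finset.mem_filter.mpr ⟨(hend' g hg').2, (hsplit2 g hg').mp hP1⟩⟩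
      have hconn1 : ∀ a ∈ X1, ∀ b ∈ X1, EdgeConn F1 a b := by
        intro a' ha' b' hb'
        obtain ⟨haX, haP⟩ := Finset.mem_filter.mp ha'
        obtain ⟨hbX, hbP⟩ := Finset.mem_filter.mp hb'
        exact ec_filter hsplit (ec_trans (ec_symm haP) hbP) haP
      have hconn2 : ∀ a ∈ X2, ∀ b ∈ X2, EdgeConn F2 a b := by
        intro a' ha' b' hb'
        obtain ⟨haX, haP⟩ := Finset.mem_filter.mp ha'
        obtain ⟨hbX, hbP⟩ := Finset.mem_filter.mp hb'
        have h0 := hconn a' haX b' hbX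
        rw [← Finset.insert_erase he0] at h0
        rcases ec_insert h0 with h | ⟨h1, h2⟩ | ⟨h1, h2⟩
        · exact ec_filter (P := fun v => ¬ P v) hsplit2 h haP
        · exact absurd (ec_symm h1) haP
        · exact absurd h2 hbP
      have IH1 := IH F1 (lt_of_le_of_lt (Finset.filter_subset _ _) hF'sub) X1 hend1 hconn1
      have IH2 := IH F2 (lt_of_le_of_lt (Finset.filter_subset _ _) hF'sub) X2 hend2 hconn2
      have cX : X1.card + X2.card = X.card := Finset.card_filter_add_card_filter_not _
      have cF : F1.card + F2.card = F'.card := Finset.card_filter_add_card_filter_not _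
      have cF' : F'.card = F.card - 1 := Finset.card_erase_of_mem he0
      have hFpos : 0 < F.card := Finset.card_pos.mpr ⟨e0, he0⟩
      omega

lemma tree_no_cycle {Es : Finset (U × U)} {X : Finset U} {T : Finset (U × U)}
    (hT : IsSpanningTree Es X T) : ∀ e ∈ T, ¬ EdgeConn (T.erase e) e.1 e.2 := by
  intro e he hcon
  have hconnX : ∀ a ∈ X, ∀ b ∈ X, EdgeConn (T.erase e) a b := by
    intro a ha b hb
    have h0 := hT.2.2.1 a ha b hb
    rw [← Finset.insert_erase he] at h0
    rcases ec_insert h0 with h | ⟨h1, h2⟩ | ⟨h1, h2⟩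
    · exact h
    · exact ec_trans (ec_trans h1 hcon) h2
    · exact ec_trans (ec_trans h1 (ec_symm hcon)) h2
  have hlb := conn_card_lb (T.erase e) X
    (fun g hg => hT.2.1 g (Finset.mem_of_mem_erase hg)) hconnX
  have hce : (T.erase e).card = T.card - 1 := Finset.card_erase_of_mem he
  have h1 : 0 < T.card := Finset.card_pos.mpr ⟨e, he⟩
  have hcard := hT.2.2.2
  omega

lemma tree_dichotomy {Es : Finset (U × U)} {X : Finset U} {T : Finset (U × U)}
    (hT : IsSpanningTree Es X T) {e : U × U} (he : e ∈ T)
    {v : U} (hv : v ∈ X) : EdgeConn (T.erase e) e.1 v ∨ EdgeConn (T.erase e) e.2 v := by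
  have h1X : e.1 ∈ X := (hT.2.1 e he).1
  have h0 := hT.2.2.1 e.1 h1X v hv
  rw [← Finset.insert_erase he] at h0
  rcases ec_insert h0 with h | ⟨h1, h2⟩ | ⟨h1, h2⟩
  · exact Or.inl h
  · exact Or.inr h2
  · exact Or.inl h2

lemma ec_sep {P : U → Prop} :
    ∀ F : Finset (U × U), (∀ g ∈ F, ¬ EdgeConn (F.erase g) g.1 g.2) →
      ∀ a b, EdgeConn F a b → P a → ¬ P b →
      ∃ e ∈ F, ((P e.1 ∧ ¬ P e.2) ∨ (P e.2 ∧ ¬ P e.1)) ∧ ¬ EdgeConn (F.erase e) a b := by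
  intro F
  induction F using Finset.strongInduction with
  | _ F IH =>
    intro hforest a b hab ha hb
    obtain ⟨e0, he0, hcr0⟩ := ec_cross hab ha hb
    by_cases hc : EdgeConn (F.erase e0) a b
    · have hforest' : ∀ g ∈ F.erase e0, ¬ EdgeConn ((F.erase e0).erase g) g.1 g.2 := by
        intro g hg hcon
        refine hforest g (Finset.mem_of_mem_erase hg) (ec_mono ?_ hcon)
        intro x hx
        obtain ⟨hx1, hx2⟩ := Finset.mem_erase.mp hx
        exact Finset.mem_erase.mpr ⟨hx1, Finset.mem_of_mem_erase hx2⟩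
      obtain ⟨e, he, hcr, hne⟩ := IH _ (Finset.erase_ssubset he0) hforest' a b hc ha hb
      refine ⟨e, Finset.mem_of_mem_erase he, hcr, fun hcon => ?_⟩
      have heE : e ∈ F.erase e0 := he
      rw [← Finset.insert_erase heE] at hc
      have hH : ((F.erase e0).erase e) ⊆ F.erase e := by
        intro x hx
        obtain ⟨hx1, hx2⟩ := Finset.mem_erase.mp hx
        exact Finset.mem_erase.mpr ⟨hx1, Finset.mem_of_mem_erase hx2⟩
      rcases ec_insert hc with h | ⟨h1, h2⟩ | ⟨h1, h2⟩
      · exact hne h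
      · exact hforest e (Finset.mem_of_mem_erase heE)
          (ec_trans (ec_trans (ec_symm (ec_mono hH h1)) hcon) (ec_symm (ec_mono hH h2)))
      · exact hforest e (Finset.mem_of_mem_erase heE)
          (ec_trans (ec_mono hH h2) (ec_trans (ec_symm hcon) (ec_mono hH h1)))
    · exact ⟨e0, he0, hcr0, hc⟩

end B

set_option linter.unusedSectionVars false
section C
open Finset
variable {U : Type*} [DecidableEq U]

lemma OPT_finite (Es : Finset (U × U)) (X : Finset U) (w : U × U → ℝ) :
    {t | ∃ F, IsSpanningTree Es X F ∧ t = ∑ e ∈ F, w e}.Finite := by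
  apply Set.Finite.subset (Set.Finite.image (fun F => ∑ e ∈ F, w e) Es.powerset.finite_toSet)
  rintro t ⟨F, hF, rfl⟩
  exact ⟨F, by simpa [Finset.mem_powerset] using hF.1, rfl⟩

lemma OPT_le {Es : Finset (U × U)} {X : Finset U} (w : U × U → ℝ)
    {F : Finset (U × U)} (hF : IsSpanningTree Es X F) :
    OPT Es X w ≤ ∑ e ∈ F, w e :=
  csInf_le (OPT_finite Es X w).bddBelow ⟨F, hF, rfl⟩

lemma OPT_spec {Es : Finset (U × U)} {X : Finset U} (w : U × U → ℝ)
    (hne : ∃ F, IsSpanningTree Es X F) :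
    ∃ F, IsSpanningTree Es X F ∧ OPT Es X w = ∑ e ∈ F, w e := by
  obtain ⟨F0, h0⟩ := hne
  have hmem := Set.Nonempty.csInf_mem (s := {t | ∃ F, IsSpanningTree Es X F ∧ t = ∑ e ∈ F, w e})
    ⟨_, F0, h0, rfl⟩ (OPT_finite Es X w)
  exact hmem

lemma star_tree {Es : Finset (U × U)} {r : U} {S : Finset U}
    (hS : ∀ v ∈ S, v ≠ r) (hstar : ∀ v ∈ S, (r, v) ∈ Es) :
    IsSpanningTree Es (insert r S) (S.image fun v => (r, v)) := by
  refine ⟨?_, ?_, ?_, ?_⟩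
  · intro g hg
    obtain ⟨v, hv, rfl⟩ := Finset.mem_image.mp hg
    exact hstar v hv
  · intro g hg
    obtain ⟨v, hv, rfl⟩ := Finset.mem_image.mp hg
    exact ⟨Finset.mem_insert_self r S, Finset.mem_insert_of_mem hv⟩
  · have key : ∀ a ∈ insert r S, EdgeConn (S.image fun v => (r, v)) r a := by
      intro a haa
      rcases Finset.mem_insert.mp haa with rfl | haS
      · exact ec_refl _ _
      · exact Relation.ReflTransGen.single (Or.inl (Finset.mem_image.mpr ⟨a, haS, rfl⟩))
    intro a ha b hb
    exact ec_trans (ec_symm (key a ha)) (key b hb)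
  · rw [Finset.card_image_of_injective _ (fun x y h => congrArg Prod.snd h),
      Finset.card_insert_of_notMem (fun hr => hS r hr rfl)]

variable {f : U × U} {δ : ℝ}

lemma sum_wp (w : U × U → ℝ) (f : U × U) (δ : ℝ) (F : Finset (U × U)) :
    ∑ e ∈ F, (if e = f then w e + δ else w e)
      = (∑ e ∈ F, w e) + (if f ∈ F then δ else 0) := by
  have h : ∀ e ∈ F, (if e = f then w e + δ else w e) = w e + (if e = f then δ else 0) := by
    intro e _
    split <;> simp
  rw [Finset.sum_congr rfl h, Finset.sum_add_distrib, Finset.sum_ite_eq' F f (fun _ => δ)]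

lemma OPT_le_OPT' {Es : Finset (U × U)} {X : Finset U} (w : U × U → ℝ)
    (hδ : 0 ≤ δ) (hne : ∃ F, IsSpanningTree Es X F) :
    OPT Es X w ≤ OPT Es X (fun e => if e = f then w e + δ else w e) := by
  obtain ⟨F, hF, hOPT⟩ := OPT_spec (fun e => if e = f then w e + δ else w e) hne
  rw [hOPT, sum_wp]
  have : (0:ℝ) ≤ (if f ∈ F then δ else 0) := by split <;> simp [hδ]
  linarith [OPT_le w hF]

lemma OPT'_le_OPT_add {Es : Finset (U × U)} {X : Finset U} (w : U × U → ℝ)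
    (hδ : 0 ≤ δ) (hne : ∃ F, IsSpanningTree Es X F) :
    OPT Es X (fun e => if e = f then w e + δ else w e) ≤ OPT Es X w + δ := by
  obtain ⟨F, hF, hOPT⟩ := OPT_spec w hne
  have h1 := OPT_le (fun e => if e = f then w e + δ else w e) hF
  rw [sum_wp] at h1
  have : (if f ∈ F then δ else 0) ≤ δ := by split <;> simp [hδ]
  linarith

lemma OPT'_eq {Es : Finset (U × U)} {X : Finset U} (w : U × U → ℝ)
    (hm : f.1 ∉ X ∨ f.2 ∉ X) :
    OPT Es X (fun e => if e = f then w e + δ else w e) = OPT Es X w := by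
  unfold OPT
  congr 1
  ext t
  have hkey : ∀ F, IsSpanningTree Es X F →
      (∑ e ∈ F, (if e = f then w e + δ else w e)) = ∑ e ∈ F, w e := by
    intro F hF
    refine Finset.sum_congr rfl fun e he => ?_
    have hef : e ≠ f := by
      rintro rfl
      rcases hm with hm | hm
      · exact hm (hF.2.1 e he).1
      · exact hm (hF.2.1 e he).2
    rw [if_neg hef]
  constructor
  · rintro ⟨F, hF, rfl⟩
    exact ⟨F, hF, (hkey F hF)⟩
  · rintro ⟨F, hF, rfl⟩
    exact ⟨F, hF, (hkey F hF).symm⟩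

end C

set_option linter.unusedSectionVars false
section D
open Finset
variable {U : Type*} [DecidableEq U]

lemma OPT_submono {Es : Finset (U × U)} {X Y : Finset U} (w : U × U → ℝ)
    {f : U × U} {δ : ℝ} (hf : f ∈ Es) (hδ : 0 ≤ δ) (hXY : X ⊆ Y)
    (h1 : f.1 ∈ X) (h2 : f.2 ∈ X)
    (hneX : ∃ F, IsSpanningTree Es X F) (hneY : ∃ F, IsSpanningTree Es Y F) :
    OPT Es Y (fun e => if e = f then w e + δ else w e) + OPT Es X w ≤
      OPT Es Y w + OPT Es X (fun e => if e = f then w e + δ else w e) := by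
  set w' : U × U → ℝ := fun e => if e = f then w e + δ else w e with hw'
  obtain ⟨TY, hTY, hoY⟩ := OPT_spec w hneY
  obtain ⟨TX, hTX, hoX⟩ := OPT_spec w' hneX
  by_cases hfY : f ∈ TY
  · by_cases hfX : f ∈ TX
    · -- easy case: both contain f
      have e1 : ∑ e ∈ TY, w' e = (∑ e ∈ TY, w e) + δ := by
        rw [hw', sum_wp, if_pos hfY]
      have e2 : ∑ e ∈ TX, w' e = (∑ e ∈ TX, w e) + δ := by
        rw [hw', sum_wp, if_pos hfX]
      have b1 : OPT Es Y w' ≤ (∑ e ∈ TY, w e) + δ := e1 ▸ OPT_le w' hTY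
      have b2 : OPT Es X w ≤ ∑ e ∈ TX, w e := OPT_le w hTX
      linarith
    · -- hard case: f ∈ TY, f ∉ TX
      have hnoff : ¬ EdgeConn (TY.erase f) f.1 f.2 := tree_no_cycle hTY f hfY
      obtain ⟨e, heTX, hcr, hsep⟩ :=
        ec_sep (P := fun v => EdgeConn (TY.erase f) f.1 v) TX (tree_no_cycle hTX) f.1 f.2
          (hTX.2.2.1 f.1 h1 f.2 h2) (ec_refl _ f.1) hnoff
      have hef : e ≠ f := fun h => hfX (h ▸ heTX)
      have heX1 : e.1 ∈ X := (hTX.2.1 e heTX).1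
      have heX2 : e.2 ∈ X := (hTX.2.1 e heTX).2
      have henot : e ∉ TY.erase f := by
        intro hmem
        have hstep : EdgeConn (TY.erase f) e.1 e.2 := ec_single hmem
        rcases hcr with ⟨p1, p2⟩ | ⟨p1, p2⟩
        · exact p2 (ec_trans p1 hstep)
        · exact p2 (ec_trans p1 (ec_symm hstep))
      have hsubY : TY.erase f ⊆ insert e (TY.erase f) := Finset.subset_insert _ _
      have hestep : EdgeConn (insert e (TY.erase f)) e.1 e.2 :=
        ec_single (Finset.mem_insert_self _ _)
      have hbrY : EdgeConn (insert e (TY.erase f)) f.1 f.2 := by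
        rcases hcr with ⟨p1, p2⟩ | ⟨p1, p2⟩
        · have h22 : EdgeConn (TY.erase f) f.2 e.2 :=
            (tree_dichotomy hTY hfY (hXY heX2)).resolve_left p2
          exact ec_trans (ec_mono hsubY p1) (ec_trans hestep (ec_symm (ec_mono hsubY h22)))
        · have h21 : EdgeConn (TY.erase f) f.2 e.1 :=
            (tree_dichotomy hTY hfY (hXY heX1)).resolve_left p2
          exact ec_trans (ec_mono hsubY p1)
            (ec_trans (ec_symm hestep) (ec_symm (ec_mono hsubY h21)))
      have hT'Y : IsSpanningTree Es Y (insert e (TY.erase f)) := by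
        refine ⟨?_, ?_, ?_, ?_⟩
        · intro g hg
          rcases Finset.mem_insert.mp hg with rfl | hg'
          · exact hTX.1 heTX
          · exact hTY.1 (Finset.mem_of_mem_erase hg')
        · intro g hg
          rcases Finset.mem_insert.mp hg with rfl | hg'
          · exact ⟨hXY heX1, hXY heX2⟩
          · exact hTY.2.1 g (Finset.mem_of_mem_erase hg')
        · intro a ha b hb
          have h0 := hTY.2.2.1 a ha b hb
          rw [← Finset.insert_erase hfY] at h0
          rcases ec_insert h0 with h | ⟨q1, q2⟩ | ⟨q1, q2⟩
          · exact ec_mono hsubY h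
          · exact ec_trans (ec_mono hsubY q1) (ec_trans hbrY (ec_mono hsubY q2))
          · exact ec_trans (ec_mono hsubY q1) (ec_trans (ec_symm hbrY) (ec_mono hsubY q2))
        · rw [Finset.card_insert_of_notMem henot, Finset.card_erase_of_mem hfY]
          have : 0 < TY.card := Finset.card_pos.mpr ⟨f, hfY⟩
          have := hTY.2.2.2
          omega
      have hfnot : f ∉ TX.erase e := fun h => hfX (Finset.mem_of_mem_erase h)
      have hsubX : TX.erase e ⊆ insert f (TX.erase e) := Finset.subset_insert _ _
      have hfstep : EdgeConn (insert f (TX.erase e)) f.1 f.2 :=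
        ec_single (Finset.mem_insert_self _ _)
      have hbrX : EdgeConn (insert f (TX.erase e)) e.1 e.2 := by
        rcases tree_dichotomy hTX heTX h1 with q1 | q1 <;>
          rcases tree_dichotomy hTX heTX h2 with q2 | q2
        · exact absurd (ec_trans (ec_symm q1) q2) hsep
        · exact ec_trans (ec_mono hsubX q1)
            (ec_trans hfstep (ec_symm (ec_mono hsubX q2)))
        · exact ec_trans (ec_mono hsubX q2)
            (ec_trans (ec_symm hfstep) (ec_symm (ec_mono hsubX q1)))
        · exact absurd (ec_trans (ec_symm q1) q2) hsep
      have hT'X : IsSpanningTree Es X (insert f (TX.erase e)) := by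
        refine ⟨?_, ?_, ?_, ?_⟩
        · intro g hg
          rcases Finset.mem_insert.mp hg with rfl | hg'
          · exact hf
          · exact hTX.1 (Finset.mem_of_mem_erase hg')
        · intro g hg
          rcases Finset.mem_insert.mp hg with rfl | hg'
          · exact ⟨h1, h2⟩
          · exact hTX.2.1 g (Finset.mem_of_mem_erase hg')
        · intro a ha b hb
          have h0 := hTX.2.2.1 a ha b hb
          rw [← Finset.insert_erase heTX] at h0
          rcases ec_insert h0 with h | ⟨q1, q2⟩ | ⟨q1, q2⟩
          · exact ec_mono hsubX h
          · exact ec_trans (ec_mono hsubX q1) (ec_trans hbrX (ec_mono hsubX q2))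
          · exact ec_trans (ec_mono hsubX q1) (ec_trans (ec_symm hbrX) (ec_mono hsubX q2))
        · rw [Finset.card_insert_of_notMem hfnot, Finset.card_erase_of_mem heTX]
          have : 0 < TX.card := Finset.card_pos.mpr ⟨e, heTX⟩
          have := hTX.2.2.2
          omega
      -- weight computations
      have hwe : w' e = w e := if_neg hef
      have hwf : w' f = w f + δ := if_pos rfl
      have E1 : ∑ g ∈ insert e (TY.erase f), w' g = (∑ g ∈ TY, w g) + w e - w f := by
        rw [Finset.sum_insert henot, Finset.sum_erase_eq_sub hfY, hw', sum_wp, if_pos hfY]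
        rw [← hw', hwe, hwf]
        ring
      have E2 : ∑ g ∈ insert f (TX.erase e), w g = (∑ g ∈ TX, w g) - w e + w f := by
        rw [Finset.sum_insert hfnot, Finset.sum_erase_eq_sub heTX]
        ring
      have E3 : ∑ g ∈ TX, w g = ∑ g ∈ TX, w' g := by
        rw [hw', sum_wp, if_neg hfX, add_zero]
      have b1 : OPT Es Y w' ≤ (∑ g ∈ TY, w g) + w e - w f := E1 ▸ OPT_le w' hT'Y
      have b2 : OPT Es X w ≤ (∑ g ∈ TX, w g) - w e + w f := E2 ▸ OPT_le w hT'X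
      linarith
  · -- easy case: f ∉ TY
    have e1 : ∑ e ∈ TY, w' e = ∑ e ∈ TY, w e := by
      rw [hw', sum_wp, if_neg hfY, add_zero]
    have e2 : ∑ e ∈ TX, w e ≤ ∑ e ∈ TX, w' e := by
      rw [hw', sum_wp]
      have : (0:ℝ) ≤ (if f ∈ TX then δ else 0) := by split <;> simp [hδ]
      linarith
    have b1 : OPT Es Y w' ≤ ∑ e ∈ TY, w e := e1 ▸ OPT_le w' hTY
    have b2 : OPT Es X w ≤ ∑ e ∈ TX, w e := OPT_le w hTX
    linarith

end D

set_option linter.unusedSectionVars false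
section E
open Finset

lemma chain_bound (δ : ℝ) (h : ℕ → ℝ) (Q : ℕ → Prop)
    (h1 : ∀ k, 0 ≤ h k) (h2 : ∀ k, h k ≤ δ) (h3 : ∀ k, ¬ Q k → h k = 0)
    (h4 : ∀ k, Q k → Q (k + 1)) (h5 : ∀ k, Q k → h (k + 1) ≤ h k) :
    ∀ n, (∑ k ∈ Finset.range n, |h (k + 1) - h k|) + h n ≤ 2 * δ := by
  have main : ∀ n, (¬ Q n → (∑ k ∈ Finset.range n, |h (k + 1) - h k|) = 0) ∧
      (∑ k ∈ Finset.range n, |h (k + 1) - h k|) + h n ≤ 2 * δ := by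
    intro n
    induction n with
    | zero =>
      constructor
      · intro _; simp
      · simp
        linarith [h2 0, h1 0]
    | succ n ih =>
      constructor
      · intro hQ
        have hQn : ¬ Q n := fun hq => hQ (h4 n hq)
        rw [Finset.sum_range_succ, ih.1 hQn, h3 n hQn, h3 (n + 1) hQ]
        simp
      · rw [Finset.sum_range_succ]
        by_cases hQn : Q n
        · have hd := h5 n hQn
          rw [abs_of_nonpos (by linarith)]
          linarith [ih.2]
        · have h0 : h n = 0 := h3 n hQn
          have hs0 := ih.1 hQn
          rw [hs0, h0, abs_of_nonneg (by linarith [h1 (n + 1)])]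
          linarith [h2 (n + 1)]
  exact fun n => (main n).2

end E



theorem stmt_14 {U : Type*} [Fintype U] [DecidableEq U]
    (Es : Finset (U × U)) (r : U)
    (hstar : ∀ v : U, v ≠ r → (r, v) ∈ Es)
    (w : U × U → ℝ) (hw : ∀ e, 0 ≤ w e)
    (f : U × U) (hf : f ∈ Es) (δ : ℝ) (hδ : 0 < δ)
    (σ : Fin (Fintype.card {u : U // u ≠ r}) ≃ {u : U // u ≠ r}) :
    ∑ k ∈ Finset.range (Fintype.card {u : U // u ≠ r}),
        |(mstNu Es r (fun e => if e = f then w e + δ else w e) (prefixSet r σ (k + 1)) -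
            mstNu Es r (fun e => if e = f then w e + δ else w e) (prefixSet r σ k)) -
          (mstNu Es r w (prefixSet r σ (k + 1)) - mstNu Es r w (prefixSet r σ k))|
      ≤ 2 * δ := by
  classical
  set w' : U × U → ℝ := fun e => if e = f then w e + δ else w e with hw'
  have hpre_ne : ∀ k, ∀ v ∈ prefixSet r σ k, v ≠ r := by
    intro k v hv
    simp only [prefixSet, Finset.mem_image, Finset.mem_filter] at hv
    obtain ⟨j, _, rfl⟩ := hv
    exact (σ j).2
  have hne : ∀ k, ∃ F, IsSpanningTree Es (insert r (prefixSet r σ k)) F :=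
    fun k => ⟨_, star_tree (hpre_ne k) (fun v hv => hstar v (hpre_ne k v hv))⟩
  have hmono : ∀ k, insert r (prefixSet r σ k) ⊆ insert r (prefixSet r σ (k + 1)) := by
    intro k
    apply Finset.insert_subset_insert
    intro v hv
    simp only [prefixSet, Finset.mem_image, Finset.mem_filter] at hv ⊢
    obtain ⟨j, hj, rfl⟩ := hv
    exact ⟨j, ⟨hj.1, by omega⟩, rfl⟩
  set h : ℕ → ℝ := fun k =>
    OPT Es (insert r (prefixSet r σ k)) w' - OPT Es (insert r (prefixSet r σ k)) w with hh
  set Q : ℕ → Prop := fun k =>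
    f.1 ∈ insert r (prefixSet r σ k) ∧ f.2 ∈ insert r (prefixSet r σ k) with hQ
  have H1 : ∀ k, 0 ≤ h k := fun k => by
    have := OPT_le_OPT' (Es := Es) (X := insert r (prefixSet r σ k)) (f := f) (δ := δ)
      w hδ.le (hne k)
    simp only [hh]
    linarith
  have H2 : ∀ k, h k ≤ δ := fun k => by
    have := OPT'_le_OPT_add (Es := Es) (X := insert r (prefixSet r σ k)) (f := f) (δ := δ)
      w hδ.le (hne k)
    simp only [hh]
    linarith
  have H3 : ∀ k, ¬ Q k → h k = 0 := by
    intro k hq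
    have hm := not_and_or.mp hq
    have := OPT'_eq (Es := Es) (X := insert r (prefixSet r σ k)) (δ := δ) w hm
    simp only [hh]
    linarith
  have H4 : ∀ k, Q k → Q (k + 1) := by
    intro k ⟨q1, q2⟩
    exact ⟨hmono k q1, hmono k q2⟩
  have H5 : ∀ k, Q k → h (k + 1) ≤ h k := by
    intro k ⟨q1, q2⟩
    have := OPT_submono (Es := Es) w hf hδ.le (hmono k) q1 q2 (hne k) (hne (k + 1))
    simp only [hh]
    linarith
  have HC := chain_bound δ h Q H1 H2 H3 H4 H5 (Fintype.card {u : U // u ≠ r})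
  have Hsum : ∑ k ∈ Finset.range (Fintype.card {u : U // u ≠ r}),
      |(mstNu Es r w' (prefixSet r σ (k + 1)) - mstNu Es r w' (prefixSet r σ k)) -
        (mstNu Es r w (prefixSet r σ (k + 1)) - mstNu Es r w (prefixSet r σ k))|
      = ∑ k ∈ Finset.range (Fintype.card {u : U // u ≠ r}), |h (k + 1) - h k| := by
    refine Finset.sum_congr rfl fun k _ => ?_
    have : (mstNu Es r w' (prefixSet r σ (k + 1)) - mstNu Es r w' (prefixSet r σ k)) -
        (mstNu Es r w (prefixSet r σ (k + 1)) - mstNu Es r w (prefixSet r σ k))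
        = h (k + 1) - h k := by
      simp only [mstNu, hh]
      ring
    rw [this]
  rw [Hsum]
  linarith [H1 (Fintype.card {u : U // u ≠ r})]
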